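/- No straight hairy Cantor set X ⊆ ℝ² is locally connected. -/

import Mathlib

open Set Filter Topology Metric

/-- A Cantor set in ℝ: nonempty, compact, perfect, totally disconnected. -/
def IsCantorSet (C : Set ℝ) : Prop :=
  C.Nonempty ∧ IsCompact C ∧ Perfect C ∧ IsTotallyDisconnected C

/-- `x` is an end point of the Cantor set `C`. -/
def IsEndpointOf (C : Set ℝ) (x : ℝ) : Prop :=
  ∃ δ > (0:ℝ), Ioo x (x + δ) ∩ C = ∅ ∨ Ioo (x - δ) x ∩ C = ∅

/-- `X` is the straight hairy Cantor set determined by the base Cantor set `C` and the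
length function `l`. -/
def IsStraightHairyCantorSetWith (C : Set ℝ) (l : ℝ → ℝ) (X : Set (ℝ × ℝ)) : Prop :=
  IsCantorSet C ∧ (∀ x ∈ C, 0 ≤ l x) ∧
  X = {p : ℝ × ℝ | p.1 ∈ C ∧ 0 ≤ p.2 ∧ p.2 ≤ l p.1} ∧
  -- (i) the set of points with positive length is dense in C
  C ⊆ closure {x | x ∈ C ∧ 0 < l x} ∧
  -- (ii) at end points, l vanishes together with its limsup
  (∀ x ∈ C, IsEndpointOf C x →
    l x = 0 ∧ Filter.limsup l (𝓝[C \ {x}] x) = 0) ∧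
  -- (iii) at non end points, one-sided limsups equal l x
  (∀ x ∈ C, ¬ IsEndpointOf C x →
    Filter.limsup l (𝓝[C ∩ Iio x] x) = l x ∧ Filter.limsup l (𝓝[C ∩ Ioi x] x) = l x)

/-- `X ⊆ ℝ²` is a straight hairy Cantor set. -/
def IsStraightHairyCantorSet (X : Set (ℝ × ℝ)) : Prop :=
  ∃ C l, IsStraightHairyCantorSetWith C l X

/-- Theorem: no straight hairy Cantor set is locally connected (in the subspace
topology from ℝ²). -/
theorem straight_hairy_cantor_set_not_locallyConnected
    (X : Set (ℝ × ℝ)) (h : IsStraightHairyCantorSet X) :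
    ¬ LocallyConnectedSpace X := by
  intro hlc
  obtain ⟨C, l, hcantor, hl0, hX, -, -, -⟩ := h
  subst hX
  obtain ⟨⟨x, hx⟩, -, hperf, htd⟩ := hcantor
  have hpX : ((x, (0:ℝ)) : ℝ × ℝ) ∈ {p : ℝ × ℝ | p.1 ∈ C ∧ 0 ≤ p.2 ∧ p.2 ≤ l p.1} :=
    ⟨hx, le_refl 0, hl0 x hx⟩
  set p : {p : ℝ × ℝ | p.1 ∈ C ∧ 0 ≤ p.2 ∧ p.2 ≤ l p.1} := ⟨(x, 0), hpX⟩ with hp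
  have hK : IsOpen (connectedComponent p) := isOpen_connectedComponent
  have hproj : ∀ q ∈ connectedComponent p, (q : ℝ × ℝ).1 = x := by
    intro q hq
    have hcont : Continuous fun q : {p : ℝ × ℝ | p.1 ∈ C ∧ 0 ≤ p.2 ∧ p.2 ≤ l p.1} => (q : ℝ × ℝ).1 := continuous_fst.comp continuous_subtype_val
    have hconn : IsPreconnected ((fun q : {p : ℝ × ℝ | p.1 ∈ C ∧ 0 ≤ p.2 ∧ p.2 ≤ l p.1} => (q : ℝ × ℝ).1) '' connectedComponent p) :=
      isPreconnected_connectedComponent.image _ hcont.continuousOn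
    have hsub : (fun q : {p : ℝ × ℝ | p.1 ∈ C ∧ 0 ≤ p.2 ∧ p.2 ≤ l p.1} => (q : ℝ × ℝ).1) '' connectedComponent p ⊆ C := by
      rintro t ⟨q, _, rfl⟩
      exact q.2.1
    have hsing := htd _ hsub hconn
    exact hsing ⟨q, hq, rfl⟩ ⟨p, mem_connectedComponent, rfl⟩
  have hmem : connectedComponent p ∈ 𝓝 p := hK.mem_nhds mem_connectedComponent
  rw [hp, nhds_subtype_eq_comap, Filter.mem_comap] at hmem
  obtain ⟨U, hU, hUsub⟩ := hmem
  have hc : Continuous fun t : ℝ => ((t, (0:ℝ)) : ℝ × ℝ) := continuous_id.prodMk continuous_const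
  have hU' : {t : ℝ | ((t, (0:ℝ)) : ℝ × ℝ) ∈ U} ∈ 𝓝 x :=
    hc.continuousAt.preimage_mem_nhds hU
  obtain ⟨t, ⟨htU, htC⟩, htx⟩ := accPt_iff_nhds.mp (hperf.acc x hx) _ hU'
  have htX : ((t, (0:ℝ)) : ℝ × ℝ) ∈ {p : ℝ × ℝ | p.1 ∈ C ∧ 0 ≤ p.2 ∧ p.2 ≤ l p.1} :=
    ⟨htC, le_refl 0, hl0 t htC⟩
  have hmemK : (⟨(t, 0), htX⟩ : {p : ℝ × ℝ | p.1 ∈ C ∧ 0 ≤ p.2 ∧ p.2 ≤ l p.1}) ∈ connectedComponent p := hUsub htU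
  exact htx (hproj _ hmemK)
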